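/- Let X be a compact metric space, ρ and ρ_N finite Borel measures on X with ρ_N converging weakly to ρ, and k : X × X → ℝ continuous. Then for each f ∈ C(X), the functions x ↦ ∫ k(x, y) f(y) dρ_N(y) converge uniformly on X to x ↦ ∫ k(x, y) f(y) dρ(y). -/

import Mathlib

open MeasureTheory Filter

/-- If finite Borel measures `ρ_N` on a compact metric space converge weakly to `ρ`, and
`k` is a continuous kernel, then for each continuous `f` the functions
`x ↦ ∫ k (x, y) f y dρ_N(y)` converge uniformly to `x ↦ ∫ k (x, y) f y dρ(y)`. -/
theorem stmt12
    {X : Type*} [MetricSpace X] [CompactSpace X]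
    [MeasurableSpace X] [BorelSpace X]
    (ρ : Measure X) [IsFiniteMeasure ρ]
    (ρN : ℕ → Measure X) [∀ N, IsFiniteMeasure (ρN N)]
    (hweak : ∀ g : C(X, ℝ), Tendsto (fun N => ∫ y, g y ∂(ρN N)) atTop (nhds (∫ y, g y ∂ρ)))
    (k : X × X → ℝ) (hk : Continuous k) :
    ∀ f : C(X, ℝ),
      TendstoUniformly (fun N x => ∫ y, k (x, y) * f y ∂(ρN N))
        (fun x => ∫ y, k (x, y) * f y ∂ρ) atTop := by
  intro f
  -- integrability of all the integrands
  have hint : ∀ (x : X) (μ : Measure X) [IsFiniteMeasure μ],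
      Integrable (fun y => k (x, y) * f y) μ := by
    intro x μ _
    have hc : Continuous (fun y => k (x, y) * f y) :=
      (hk.comp (continuous_const.prodMk continuous_id)).mul f.continuous
    have := hc.continuousOn.integrableOn_compact (μ := μ) isCompact_univ
    rwa [integrableOn_univ] at this
  -- bound on the norm of f
  set M : ℝ := ‖f‖ + 1 with hMdef
  have hM : 0 < M := by positivity
  have hfy : ∀ y, ‖f y‖ ≤ M := fun y => le_trans (f.norm_coe_le_norm y) (by simp [hMdef])
  -- uniform bound B on the masses
  have h1 : Tendsto (fun N => ((ρN N) Set.univ).toReal) atTop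
      (nhds ((ρ Set.univ).toReal)) := by
    have := hweak 1
    simp [integral_const, smul_eq_mul] at this
    exact this
  obtain ⟨B0, hB0⟩ := h1.bddAbove_range
  set B : ℝ := max B0 (ρ Set.univ).toReal + 1 with hBdef
  have hB : 0 < B := by
    have : (0:ℝ) ≤ max B0 (ρ Set.univ).toReal :=
      le_trans ENNReal.toReal_nonneg (le_max_right _ _)
    linarith
  have hBN : ∀ N, ((ρN N) Set.univ).toReal ≤ B := by
    intro N
    have := hB0 (Set.mem_range_self N)
    calc ((ρN N) Set.univ).toReal ≤ B0 := this
      _ ≤ B := by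
        have := le_max_left B0 (ρ Set.univ).toReal
        linarith
  have hBρ : (ρ Set.univ).toReal ≤ B := by
    have := le_max_right B0 (ρ Set.univ).toReal
    linarith
  rw [Metric.tendstoUniformly_iff]
  intro ε hε
  -- modulus of continuity
  set η : ℝ := ε / (4 * M * B) with hηdef
  have hη : 0 < η := by positivity
  have huc : UniformContinuous k := CompactSpace.uniformContinuous_of_continuous hk
  obtain ⟨δ, hδ, hδk⟩ := Metric.uniformContinuous_iff.1 huc η hη
  -- finite cover
  obtain ⟨t, ht⟩ := isCompact_univ.elim_finite_subcover (fun x : X => Metric.ball x δ)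
    (fun x => Metric.isOpen_ball) (fun x _ => Set.mem_iUnion.2 ⟨x, Metric.mem_ball_self hδ⟩)
  -- eventual closeness at the centers
  have hev : ∀ᶠ N in atTop, ∀ i ∈ t,
      dist (∫ y, k (i, y) * f y ∂(ρN N)) (∫ y, k (i, y) * f y ∂ρ) < ε / 4 := by
    rw [eventually_all_finset]
    intro i _
    have hgc : Continuous (fun y => k (i, y) * f y) :=
      (hk.comp (continuous_const.prodMk continuous_id)).mul f.continuous
    have := hweak ⟨fun y => k (i, y) * f y, hgc⟩
    have h4 : (0:ℝ) < ε / 4 := by positivity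
    exact (Metric.tendsto_atTop.1 this (ε / 4) h4).imp (fun N hN n hn => hN n hn) |>.elim
      (fun N0 hN0 => eventually_atTop.2 ⟨N0, hN0⟩)
  filter_upwards [hev] with N hN x
  obtain ⟨i, hit, hxi⟩ : ∃ i ∈ t, x ∈ Metric.ball i δ := by
    have := ht (Set.mem_univ x)
    simpa using this
  rw [Metric.mem_ball] at hxi
  -- key perturbation estimate
  have key : ∀ (μ : Measure X) [IsFiniteMeasure μ], (μ Set.univ).toReal ≤ B →
      dist (∫ y, k (x, y) * f y ∂μ) (∫ y, k (i, y) * f y ∂μ) ≤ ε / 4 := by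
    intro μ _ hμB
    rw [dist_eq_norm, ← integral_sub (hint x μ) (hint i μ)]
    have hbound : ∀ᵐ y ∂μ, ‖k (x, y) * f y - k (i, y) * f y‖ ≤ η * M := by
      refine Eventually.of_forall fun y => ?_
      have hdd : dist (x, y) (i, y) < δ := by
        rw [Prod.dist_eq]
        simp only [dist_self]
        exact max_lt hxi hδ
      have hkd : ‖k (x, y) - k (i, y)‖ ≤ η := by
        have := hδk hdd
        rw [Real.dist_eq] at this
        exact le_of_lt this
      calc ‖k (x, y) * f y - k (i, y) * f y‖ = ‖(k (x, y) - k (i, y)) * f y‖ := by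
            ring_nf
        _ = ‖k (x, y) - k (i, y)‖ * ‖f y‖ := norm_mul _ _
        _ ≤ η * M := mul_le_mul hkd (hfy y) (norm_nonneg _) (le_of_lt hη)
    have := norm_integral_le_of_norm_le_const hbound
    calc ‖∫ y, (k (x, y) * f y - k (i, y) * f y) ∂μ‖ ≤ η * M * (μ Set.univ).toReal := this
      _ ≤ η * M * B := by
        apply mul_le_mul_of_nonneg_left hμB
        positivity
      _ = ε / 4 := by
        rw [hηdef]
        field_simp
  have e1 := key (ρN N) (hBN N)
  have e2 := key ρ hBρ
  have e3 := hN i hit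
  rw [dist_comm]
  calc dist (∫ y, k (x, y) * f y ∂(ρN N)) (∫ y, k (x, y) * f y ∂ρ)
      ≤ dist (∫ y, k (x, y) * f y ∂(ρN N)) (∫ y, k (i, y) * f y ∂(ρN N))
        + dist (∫ y, k (i, y) * f y ∂(ρN N)) (∫ y, k (i, y) * f y ∂ρ)
        + dist (∫ y, k (i, y) * f y ∂ρ) (∫ y, k (x, y) * f y ∂ρ) :=
        dist_triangle4 _ _ _ _
    _ < ε / 4 + ε / 4 + ε / 4 := by
        have e2' : dist (∫ y, k (i, y) * f y ∂ρ) (∫ y, k (x, y) * f y ∂ρ) ≤ ε / 4 := by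
          rw [dist_comm]; exact e2
        apply add_lt_add_of_lt_of_le (add_lt_add_of_le_of_lt e1 e3) e2'
    _ < ε := by linarith
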